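/- Let n ≥ 2, let c be a coloring of n strands, set t = t_{c_n}, let j₀ ∈ {1,…,μ} and s = t_{j₀}, and let c⁺ be the coloring of n+1 strands with c⁺_i = c_i for i ≤ n and c⁺_{n+1} = j₀. Suppose A is an (n−1)×(n−1) matrix over Λ_μ and v is a row vector of length n−1 over Λ_μ such that (A, v) satisfies the boundary relation for c, and let M = [[A,0],[v,1]]. Let G'' be the n×n matrix equal to the identity except in its last 2×2 diagonal block, which equals [[1, 1 − s^{−1}],[0, s^{−1}t^{−1}]]. Then for every m ∈ Λ_μ: F(c⁺, s·t·m, M·G'') = (t − t^{−1})·F(c, m, A) in Q. (This is the verification of Jiang's axiom (R3) for the paper's invariant f in matrix form: when A is the reduced colored Gassner matrix of a (c,c)-braid α with monomial ⟨α⟩ = m, the left-hand side is f of the closure of σ_n^{−2} i_{j₀}(α) and the right-hand side is (t_{c_n} − t_{c_n}^{−1}) times f of the closure of α.) -/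

import Mathlib

noncomputable section

open scoped BigOperators

/-- The multivariable Laurent polynomial ring `Λ_μ = ℤ[t₁^{±1},…,t_μ^{±1}]`,
realized as the group ℤ-algebra of `ℤ^μ`. -/
abbrev Lau (μ : ℕ) : Type := AddMonoidAlgebra ℤ (Fin μ →₀ ℤ)

instance (μ : ℕ) : IsDomain (Lau μ) := NoZeroDivisors.to_isDomain _

/-- The distinguished unit `t_i` of `Λ_μ`. -/
def tU {μ : ℕ} (i : Fin μ) : (Lau μ)ˣ where
  val := AddMonoidAlgebra.single (Finsupp.single i 1) 1
  inv := AddMonoidAlgebra.single (Finsupp.single i (-1)) 1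
  val_inv := by
    rw [AddMonoidAlgebra.single_mul_single, ← Finsupp.single_add]
    norm_num; rfl
  inv_val := by
    rw [AddMonoidAlgebra.single_mul_single, ← Finsupp.single_add]
    norm_num; rfl

/-- `T^c_i = t_{c_1} ⋯ t_{c_i}` (product of the first `i` values of the coloring,
zero-indexed: product over indices `k ≤ i`), as a unit of `Λ_μ`. -/
def TU {μ n : ℕ} (c : Fin n → Fin μ) (i : Fin n) : (Lau μ)ˣ :=
  ∏ k ∈ Finset.Iic i, tU (c k)

/-- The `n×n` matrix `[[A,0],[v,1]]` built from an `(n−1)×(n−1)` matrix `A`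
and a row vector `v` of length `n−1` (here `n = l+2`): the upper-left block is `A`,
the last column is `(0,…,0,1)ᵀ` and the last row begins with `v`. -/
def aug {μ l : ℕ} (A : Matrix (Fin (l+1)) (Fin (l+1)) (Lau μ)) (v : Fin (l+1) → Lau μ) :
    Matrix (Fin (l+2)) (Fin (l+2)) (Lau μ) := fun i j =>
  if hi : (i : ℕ) < l + 1 then
    if hj : (j : ℕ) < l + 1 then A ⟨i, hi⟩ ⟨j, hj⟩ else 0
  else
    if hj : (j : ℕ) < l + 1 then v ⟨j, hj⟩ else 1

/-- The pair `(A, v)` satisfies the boundary relation for the coloring `c`: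
for every column `j`, `∑_{i=1}^{n−1} (T^c_i − 1)(A − I)_{ij} = −(T^c_n − 1) v_j`. -/
def BoundaryRel {μ l : ℕ} (c : Fin (l+2) → Fin μ) (A : Matrix (Fin (l+1)) (Fin (l+1)) (Lau μ))
    (v : Fin (l+1) → Lau μ) : Prop :=
  ∀ j : Fin (l+1), ∑ i : Fin (l+1),
      ((TU c i.castSucc : Lau μ) - 1) * (A - 1) i j
    = -((TU c (Fin.last (l+1)) : Lau μ) - 1) * v j

/-- The `(l+2)×(l+2)` matrix equal to the identity except in its last `2×2`
diagonal block, which is `[[a,b],[c,d]]`. -/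
def last2Block {μ : ℕ} (l : ℕ) (a b c d : Lau μ) :
    Matrix (Fin (l+2)) (Fin (l+2)) (Lau μ) := fun i j =>
  if (i : ℕ) = l ∧ (j : ℕ) = l then a
  else if (i : ℕ) = l ∧ (j : ℕ) = l + 1 then b
  else if (i : ℕ) = l + 1 ∧ (j : ℕ) = l then c
  else if (i : ℕ) = l + 1 ∧ (j : ℕ) = l + 1 then d
  else if i = j then 1 else 0

/-- The ring endomorphism `g` of `Λ_μ` sending each `t_i` to `t_i²` (the ℤ-linear
extension of the exponent-doubling endomorphism of `ℤ^μ`). -/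
def gmap (μ : ℕ) : Lau μ →+* Lau μ :=
  AddMonoidAlgebra.mapDomainRingHom ℤ ((2 : ℕ) • AddMonoidHom.id (Fin μ →₀ ℤ))

/-- The quantity `F(c, m, A) = (−1)^{n+1} · m · g(det(A − I)) / (T^c_n − (T^c_n)^{−1})`
in the field of fractions `Q` of `Λ_μ`, for a coloring `c` of `n = k+1` strands,
a monomial `m` and a `k×k` matrix `A`. -/
def Fdef {μ k : ℕ} (c : Fin (k+1) → Fin μ) (m : Lau μ)
    (A : Matrix (Fin k) (Fin k) (Lau μ)) : FractionRing (Lau μ) :=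
  (-1) ^ (k + 2) * algebraMap (Lau μ) (FractionRing (Lau μ)) (m * gmap μ ((A - 1).det)) /
    (algebraMap (Lau μ) (FractionRing (Lau μ)) (TU c (Fin.last k) : Lau μ)
      - algebraMap (Lau μ) (FractionRing (Lau μ)) (((TU c (Fin.last k))⁻¹ : (Lau μ)ˣ) : Lau μ))

open Matrix in
lemma det_last_row {R : Type*} [CommRing R] {k : ℕ} (M : Matrix (Fin (k+1)) (Fin (k+1)) R)
    (h : ∀ j, j ≠ Fin.last k → M (Fin.last k) j = 0) :
    M.det = M (Fin.last k) (Fin.last k) * (M.submatrix Fin.castSucc Fin.castSucc).det := by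
  rw [Matrix.det_succ_row M (Fin.last k)]
  rw [Finset.sum_eq_single (Fin.last k)]
  · have h1 : (-1 : R)^(k:ℕ) * (-1)^(k:ℕ) = 1 := by
      rw [← pow_add]; exact Even.neg_one_pow ⟨k, rfl⟩
    simp [Fin.succAbove_last, h1]
  · intro j _ hj
    rw [h j hj]; ring
  · simp
open Matrix in
lemma det_last_col {R : Type*} [CommRing R] {k : ℕ} (M : Matrix (Fin (k+1)) (Fin (k+1)) R)
    (h : ∀ i, i ≠ Fin.last k → M i (Fin.last k) = 0) :
    M.det = M (Fin.last k) (Fin.last k) * (M.submatrix Fin.castSucc Fin.castSucc).det := by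
  rw [Matrix.det_succ_column M (Fin.last k)]
  rw [Finset.sum_eq_single (Fin.last k)]
  · have h1 : (-1 : R)^(k:ℕ) * (-1)^(k:ℕ) = 1 := by
      rw [← pow_add]; exact Even.neg_one_pow ⟨k, rfl⟩
    simp [Fin.succAbove_last, h1]
  · intro i _ hi
    rw [h i hi]; ring
  · simp

lemma Iic_last_eq_univ (n : ℕ) : Finset.Iic (Fin.last n) = Finset.univ :=
  Finset.eq_univ_of_forall fun x => Finset.mem_Iic.2 (Fin.le_last x)

lemma Iic_castSucc_eq {n : ℕ} (i : Fin n) :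
    Finset.Iic (Fin.castSucc i) = (Finset.Iic i).map Fin.castSuccEmb := by
  ext x
  simp only [Finset.mem_Iic, Finset.mem_map]
  constructor
  · intro hx
    have hx' : (x : ℕ) < n := lt_of_le_of_lt hx i.isLt
    exact ⟨⟨x, hx'⟩, by simpa [Fin.le_def] using hx, by simp [Fin.coe_castSuccEmb, Fin.ext_iff]⟩
  · rintro ⟨y, hy, rfl⟩
    show Fin.castSucc y ≤ Fin.castSucc i
    exact Fin.castSucc_le_castSucc_iff.2 hy

lemma TU_castSucc' {μ n : ℕ} (c : Fin (n+1) → Fin μ) (i : Fin n) :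
    TU c i.castSucc = ∏ k ∈ Finset.Iic i, tU (c k.castSucc) := by
  rw [TU, Iic_castSucc_eq, Finset.prod_map]
  rfl

lemma TU_last_eq {μ n : ℕ} (c : Fin (n+1) → Fin μ) :
    TU c (Fin.last n) = (∏ k : Fin n, tU (c k.castSucc)) * tU (c (Fin.last n)) := by
  rw [TU, Iic_last_eq_univ, Fin.prod_univ_castSucc]
lemma gmap_single {μ : ℕ} (a : Fin μ →₀ ℤ) (b : ℤ) :
    gmap μ (AddMonoidAlgebra.single a b) = AddMonoidAlgebra.single (a + a) b := by
  show AddMonoidAlgebra.mapDomain (⇑((2 : ℕ) • AddMonoidHom.id (Fin μ →₀ ℤ))) (AddMonoidAlgebra.single a b) = _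
  rw [AddMonoidAlgebra.mapDomain_single]
  congr 1
  simp [two_smul]

lemma gU_tU {μ : ℕ} (i : Fin μ) : Units.map (gmap μ) (tU i) = (tU i) ^ 2 := by
  refine Units.ext ?_
  show gmap μ (AddMonoidAlgebra.single (Finsupp.single i 1) 1) = ((tU i : Lau μ)) ^ 2
  rw [gmap_single]
  show _ = (AddMonoidAlgebra.single (Finsupp.single i 1) 1 : Lau μ) ^ 2
  rw [sq, AddMonoidAlgebra.single_mul_single, mul_one]

lemma gU_TU {μ n : ℕ} (c : Fin n → Fin μ) (i : Fin n) :
    Units.map (gmap μ) (TU c i) = (TU c i) ^ 2 := by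
  rw [TU, map_prod]
  simp_rw [gU_tU]
  rw [← Finset.prod_pow]

lemma gmap_TU {μ n : ℕ} (c : Fin n → Fin μ) (i : Fin n) :
    gmap μ ((TU c i : Lau μ)) = ((TU c i : Lau μ)) ^ 2 := by
  have := congrArg (Units.val) (gU_TU c i)
  simpa using this

lemma gmap_TU_inv {μ n : ℕ} (c : Fin n → Fin μ) (i : Fin n) :
    gmap μ (((TU c i)⁻¹ : (Lau μ)ˣ) : Lau μ) = ((((TU c i)⁻¹ : (Lau μ)ˣ) : Lau μ)) ^ 2 := by
  have := congrArg (Units.val) (congrArg (·⁻¹) (gU_TU c i))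
  simpa using this

lemma gmap_tU' {μ : ℕ} (i : Fin μ) : gmap μ ((tU i : Lau μ)) = ((tU i : Lau μ)) ^ 2 := by
  have := congrArg (Units.val) (gU_tU i)
  simpa using this

lemma gmap_tU_inv {μ : ℕ} (i : Fin μ) :
    gmap μ (((tU i)⁻¹ : (Lau μ)ˣ) : Lau μ) = ((((tU i)⁻¹ : (Lau μ)ˣ) : Lau μ)) ^ 2 := by
  have := congrArg (Units.val) (congrArg (·⁻¹) (gU_tU i))
  simpa using this

lemma TU_coe_single {μ n : ℕ} (c : Fin n → Fin μ) (i : Fin n) :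
    (TU c i : Lau μ)
      = AddMonoidAlgebra.single (∑ k ∈ Finset.Iic i, Finsupp.single (c k) 1) 1 := by
  rw [TU]
  have : ((∏ k ∈ Finset.Iic i, tU (c k) : (Lau μ)ˣ) : Lau μ)
      = ∏ k ∈ Finset.Iic i, ((tU (c k) : Lau μ)) := by
    exact_mod_cast rfl
  rw [this]
  show (∏ k ∈ Finset.Iic i, AddMonoidAlgebra.single (Finsupp.single (c k) 1) (1:ℤ)) = _
  rw [AddMonoidAlgebra.prod_single]
  simp

lemma TU_sq_ne_one {μ n : ℕ} (c : Fin n → Fin μ) (i : Fin n) :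
    ((TU c i : Lau μ)) ^ 2 ≠ 1 := by
  rw [TU_coe_single]
  set a : Fin μ →₀ ℤ := ∑ k ∈ Finset.Iic i, Finsupp.single (c k) 1 with ha
  rw [sq, AddMonoidAlgebra.single_mul_single, mul_one]
  have hane : a + a ≠ 0 := by
    have h1 : (1 : ℤ) ≤ a (c i) := by
      rw [ha, Finsupp.finset_sum_apply]
      have := Finset.single_le_sum (f := fun k => (Finsupp.single (c k) 1 : Fin μ →₀ ℤ) (c i))
        (fun k _ => by simp only [Finsupp.single_apply]; split <;> norm_num) (Finset.mem_Iic.2 (le_refl i))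
      simpa using this
    intro h0
    have h2 := congrArg (fun f : Fin μ →₀ ℤ => f (c i)) h0
    simp only [Finsupp.add_apply, Finsupp.coe_zero, Pi.zero_apply] at h2
    omega
  intro h
  rw [AddMonoidAlgebra.one_def] at h
  exact hane (AddMonoidAlgebra.single_left_injective one_ne_zero h)
lemma G_col_lt {μ l : ℕ} (bb dd : Lau μ) {j : Fin (l+2)} (hj : (j:ℕ) < l+1) (k : Fin (l+2)) :
    last2Block l 1 bb 0 dd k j = if k = j then 1 else 0 := by
  simp only [last2Block, Fin.ext_iff]
  split_ifs <;> first | rfl | omega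

lemma G_col_last {μ l : ℕ} (bb dd : Lau μ) {j : Fin (l+2)} (hj : (j:ℕ) = l+1) (k : Fin (l+2)) :
    last2Block l 1 bb 0 dd k j
      = if (k:ℕ) = l then bb else if (k:ℕ) = l+1 then dd else 0 := by
  simp only [last2Block, Fin.ext_iff]
  split_ifs <;> first | rfl | omega

def PmD {μ l : ℕ} (A : Matrix (Fin (l+1)) (Fin (l+1)) (Lau μ)) (v : Fin (l+1) → Lau μ)
    (si ti : Lau μ) : Matrix (Fin (l+2)) (Fin (l+2)) (Lau μ) := fun i j =>
  if hi : (i : ℕ) < l + 1 then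
    if hj : (j : ℕ) < l + 1 then A ⟨i, hi⟩ ⟨j, hj⟩
    else (1 - si) * A ⟨i, hi⟩ ⟨l, Nat.lt_succ_self l⟩
  else
    if hj : (j : ℕ) < l + 1 then v ⟨j, hj⟩
    else (1 - si) * v ⟨l, Nat.lt_succ_self l⟩ + si * ti

lemma aug_mul_G {μ l : ℕ} (A : Matrix (Fin (l+1)) (Fin (l+1)) (Lau μ)) (v : Fin (l+1) → Lau μ)
    (si ti : Lau μ) :
    aug A v * last2Block l 1 (1 - si) 0 (si * ti) = PmD A v si ti := by
  ext i j
  rw [Matrix.mul_apply]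
  by_cases hj : (j : ℕ) < l + 1
  · simp only [G_col_lt (1 - si) (si * ti) hj, mul_ite, mul_one, mul_zero]
    rw [Finset.sum_ite_eq' Finset.univ j (fun k => aug A v i k)]
    simp only [Finset.mem_univ, if_true]
    simp only [aug, PmD, hj, dif_pos]
  · have hj' : (j : ℕ) = l + 1 := by omega
    simp only [G_col_last (1 - si) (si * ti) hj']
    have hsum : ∀ k : Fin (l+2), aug A v i k *
        (if (k:ℕ) = l then (1 - si) else if (k:ℕ) = l+1 then si * ti else 0)
        = (if k = (⟨l, by omega⟩ : Fin (l+2)) then aug A v i k * (1 - si) else 0)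
          + (if k = (⟨l+1, by omega⟩ : Fin (l+2)) then aug A v i k * (si * ti) else 0) := by
      intro k
      by_cases h1 : (k:ℕ) = l
      · rw [if_pos h1, if_pos (Fin.ext h1 : k = ⟨l, by omega⟩),
          if_neg (Fin.ne_of_val_ne (by omega : (k:ℕ) ≠ l+1) : ¬ k = ⟨l+1, by omega⟩)]
        ring
      · by_cases h2 : (k:ℕ) = l + 1
        · rw [if_neg h1, if_pos h2,
            if_neg (Fin.ne_of_val_ne (by omega : (k:ℕ) ≠ l) : ¬ k = ⟨l, by omega⟩),
            if_pos (Fin.ext h2 : k = ⟨l+1, by omega⟩)]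
          ring
        · rw [if_neg h1, if_neg h2,
            if_neg (Fin.ne_of_val_ne (by omega : (k:ℕ) ≠ l) : ¬ k = ⟨l, by omega⟩),
            if_neg (Fin.ne_of_val_ne (by omega : (k:ℕ) ≠ l+1) : ¬ k = ⟨l+1, by omega⟩)]
          ring
    rw [Finset.sum_congr rfl (fun k _ => hsum k), Finset.sum_add_distrib,
      Finset.sum_ite_eq' Finset.univ, Finset.sum_ite_eq' Finset.univ]
    simp only [Finset.mem_univ, if_true]
    by_cases hi : (i : ℕ) < l + 1
    · simp only [aug, PmD, dif_pos hi, dif_neg (by omega : ¬ ((l+1 : ℕ) < l + 1)),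
        dif_pos (by omega : (l:ℕ) < l+1), dif_neg (by omega : ¬ ((j:ℕ) < l + 1))]
      ring
    · simp only [aug, PmD, dif_neg hi, dif_neg (by omega : ¬ ((l+1 : ℕ) < l + 1)),
        dif_pos (by omega : (l:ℕ) < l+1), dif_neg (by omega : ¬ ((j:ℕ) < l + 1))]
      ring
def Em {μ l : ℕ} (c : Fin (l+2) → Fin μ) : Matrix (Fin (l+2)) (Fin (l+2)) (Lau μ) :=
  fun i j => if i = Fin.last (l+1) then ((TU c j : Lau μ) - 1) else if i = j then 1 else 0

lemma det_Em {μ l : ℕ} (c : Fin (l+2) → Fin μ) :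
    (Em c).det = (TU c (Fin.last (l+1)) : Lau μ) - 1 := by
  rw [det_last_col (Em c) (fun i hi => by simp [Em, hi])]
  have hsub : (Em c).submatrix Fin.castSucc Fin.castSucc = 1 := by
    ext i j
    simp [Em, Matrix.one_apply, Fin.castSucc_inj, (Fin.castSucc_lt_last i).ne]
  rw [hsub, Matrix.det_one, mul_one]
  simp [Em]

def CmD {μ l : ℕ} (A : Matrix (Fin (l+1)) (Fin (l+1)) (Lau μ)) (si e : Lau μ) :
    Matrix (Fin (l+2)) (Fin (l+2)) (Lau μ) := fun i j =>
  if hi : (i : ℕ) < l + 1 then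
    if hj : (j : ℕ) < l + 1 then (A - 1) ⟨i, hi⟩ ⟨j, hj⟩
    else (1 - si) * A ⟨i, hi⟩ ⟨l, Nat.lt_succ_self l⟩
  else if (j : ℕ) < l + 1 then 0 else e

lemma det_CmD {μ l : ℕ} (A : Matrix (Fin (l+1)) (Fin (l+1)) (Lau μ)) (si e : Lau μ) :
    (CmD A si e).det = e * (A - 1).det := by
  rw [det_last_row (CmD A si e) (fun j hj => by
    have : (j : ℕ) < l + 1 := Fin.val_lt_last hj
    simp [CmD, this])]
  have hsub : (CmD A si e).submatrix Fin.castSucc Fin.castSucc = A - 1 := by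
    ext i j
    have hi' : ((i.castSucc : Fin (l+2)) : ℕ) < l + 1 := by simpa using i.isLt
    have hj' : ((j.castSucc : Fin (l+2)) : ℕ) < l + 1 := by simpa using j.isLt
    simp only [Matrix.submatrix_apply, CmD, dif_pos hi', dif_pos hj']
    congr 1 <;> exact Fin.ext (by simp)
  rw [hsub]
  simp [CmD]
lemma Em_mul {μ l : ℕ} (c : Fin (l+2) → Fin μ)
    (A : Matrix (Fin (l+1)) (Fin (l+1)) (Lau μ)) (v : Fin (l+1) → Lau μ)
    (hb : BoundaryRel c A v) (si ti : Lau μ)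
    (hti : (TU c ((Fin.last l).castSucc) : Lau μ)
        = (TU c (Fin.last (l+1)) : Lau μ) * ti) :
    Em c * (PmD A v si ti - 1)
      = CmD A si ((ti - 1) * ((TU c (Fin.last (l+1)) : Lau μ) - si)) := by
  ext i j
  rw [Matrix.mul_apply]
  by_cases hi : (i : ℕ) < l + 1
  · have hine : i ≠ Fin.last (l+1) := Fin.ne_of_val_ne (by simp; omega)
    have hsum : ∀ k : Fin (l+2), Em c i k * (PmD A v si ti - 1) k j
        = if k = i then (PmD A v si ti - 1) i j else 0 := by
      intro k
      by_cases hk : k = i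
      · subst hk; simp [Em, hine]
      · rw [if_neg hk]
        simp [Em, hine, (show ¬ i = k from fun h => hk h.symm)]
    rw [Finset.sum_congr rfl (fun k _ => hsum k), Finset.sum_ite_eq' Finset.univ i]
    simp only [Finset.mem_univ, if_true]
    -- now : (PmD - 1) i j = CmD i j
    by_cases hj : (j : ℕ) < l + 1
    · simp only [Matrix.sub_apply, PmD, CmD, dif_pos hi, dif_pos hj, Matrix.sub_apply,
        Matrix.one_apply, Fin.ext_iff]
    · simp only [Matrix.sub_apply, PmD, CmD, dif_pos hi, dif_neg hj, Matrix.one_apply,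
        if_neg (Fin.ne_of_val_ne (by omega : (i:ℕ) ≠ (j:ℕ)))]
      ring
  · have hieq : i = Fin.last (l+1) := Fin.ext (by have := i.isLt; simp; omega)
    subst hieq
    have hE : ∀ k : Fin (l+2), Em c (Fin.last (l+1)) k = (TU c k : Lau μ) - 1 := by
      intro k; simp [Em]
    simp_rw [hE]
    rw [Fin.sum_univ_castSucc]
    by_cases hj : (j : ℕ) < l + 1
    · have hPk : ∀ k : Fin (l+1), (PmD A v si ti - 1) k.castSucc j
          = (A - 1) k ⟨j, hj⟩ := by
        intro k
        have hk' : ((k.castSucc : Fin (l+2)) : ℕ) < l + 1 := by simp; omega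
        simp only [Matrix.sub_apply, PmD, dif_pos hk', dif_pos hj, Matrix.one_apply]
        have : (⟨(k.castSucc : Fin (l+2)), hk'⟩ : Fin (l+1)) = k := Fin.ext (by simp)
        rw [this]
        congr 1
        by_cases hkj : k = (⟨j, hj⟩ : Fin (l+1))
        · rw [if_pos hkj, if_pos (Fin.ext (by simpa [Fin.ext_iff] using hkj))]
        · rw [if_neg hkj, if_neg (fun h => hkj (Fin.ext (by simpa [Fin.ext_iff] using h)))]
      have hPlast : (PmD A v si ti - 1) (Fin.last (l+1)) j = v ⟨j, hj⟩ := by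
        simp only [Matrix.sub_apply, PmD, dif_neg (by simp : ¬ ((Fin.last (l+1) : Fin (l+2)) : ℕ) < l + 1),
          dif_pos hj, Matrix.one_apply,
          if_neg (Fin.ne_of_val_ne (by simp; omega : ((Fin.last (l+1) : Fin (l+2)) : ℕ) ≠ (j:ℕ)))]
        ring
      simp_rw [hPk, hPlast]
      rw [hb ⟨j, hj⟩]
      simp only [CmD, dif_neg (by simp : ¬ ((Fin.last (l+1) : Fin (l+2)) : ℕ) < l + 1), if_pos hj]
      ring
    · -- j = last
      have hPk : ∀ k : Fin (l+1), (PmD A v si ti - 1) k.castSucc j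
          = (1 - si) * A k ⟨l, Nat.lt_succ_self l⟩ := by
        intro k
        have hk' : ((k.castSucc : Fin (l+2)) : ℕ) < l + 1 := by simp; omega
        have hkj : ¬ (k.castSucc : Fin (l+2)) = j :=
          Fin.ne_of_val_ne (by have := j.isLt; simp; omega)
        simp only [Matrix.sub_apply, PmD, dif_pos hk', dif_neg hj, Matrix.one_apply, if_neg hkj]
        have : (⟨(k.castSucc : Fin (l+2)), hk'⟩ : Fin (l+1)) = k := Fin.ext (by simp)
        rw [this]
        ring
      have hPlast : (PmD A v si ti - 1) (Fin.last (l+1)) j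
          = (1 - si) * v ⟨l, Nat.lt_succ_self l⟩ + si * ti - 1 := by
        have hjeq : j = Fin.last (l+1) := Fin.ext (by have := j.isLt; simp; omega)
        subst hjeq
        simp only [Matrix.sub_apply, PmD,
          dif_neg (by simp : ¬ ((Fin.last (l+1) : Fin (l+2)) : ℕ) < l + 1),
          dif_neg hj, Matrix.one_apply]
        simp
      simp_rw [hPk, hPlast]
      -- split A = (A-1) + 1
      have hsplit : ∀ k : Fin (l+1),
          ((TU c k.castSucc : Lau μ) - 1) * ((1 - si) * A k ⟨l, Nat.lt_succ_self l⟩)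
          = (1 - si) * (((TU c k.castSucc : Lau μ) - 1) * (A - 1) k ⟨l, Nat.lt_succ_self l⟩)
            + (1 - si) * (((TU c k.castSucc : Lau μ) - 1)
                * (if k = (⟨l, Nat.lt_succ_self l⟩ : Fin (l+1)) then 1 else 0)) := by
        intro k
        have : (A - 1) k ⟨l, Nat.lt_succ_self l⟩
            = A k ⟨l, Nat.lt_succ_self l⟩ - (if k = (⟨l, Nat.lt_succ_self l⟩ : Fin (l+1)) then 1 else 0) := by
          simp [Matrix.sub_apply, Matrix.one_apply]
        rw [this]; ring
      rw [Finset.sum_congr rfl (fun k _ => hsplit k), Finset.sum_add_distrib,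
        ← Finset.mul_sum, ← Finset.mul_sum, hb ⟨l, Nat.lt_succ_self l⟩]
      have hdelta : ∑ k : Fin (l+1), ((TU c k.castSucc : Lau μ) - 1)
            * (if k = (⟨l, Nat.lt_succ_self l⟩ : Fin (l+1)) then 1 else 0)
          = (TU c ((Fin.last l).castSucc) : Lau μ) - 1 := by
        rw [Finset.sum_congr rfl (fun k _ => by
          rw [mul_ite, mul_one, mul_zero])]
        rw [Finset.sum_ite_eq' Finset.univ]
        simp only [Finset.mem_univ, if_true]
        congr 2
      rw [hdelta, hti]
      simp only [CmD, dif_neg (by simp : ¬ ((Fin.last (l+1) : Fin (l+2)) : ℕ) < l + 1), if_neg hj]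
      ring

lemma key_det {μ l : ℕ} (c : Fin (l+2) → Fin μ)
    (A : Matrix (Fin (l+1)) (Fin (l+1)) (Lau μ)) (v : Fin (l+1) → Lau μ)
    (hb : BoundaryRel c A v) (si ti : Lau μ)
    (hti : (TU c ((Fin.last l).castSucc) : Lau μ)
        = (TU c (Fin.last (l+1)) : Lau μ) * ti) :
    ((TU c (Fin.last (l+1)) : Lau μ) - 1) *
        (aug A v * last2Block l 1 (1 - si) 0 (si * ti) - 1).det
      = (ti - 1) * ((TU c (Fin.last (l+1)) : Lau μ) - si) * (A - 1).det := by
  rw [aug_mul_G]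
  have h1 : ((TU c (Fin.last (l+1)) : Lau μ) - 1) * (PmD A v si ti - 1).det
      = ((Em c) * (PmD A v si ti - 1)).det := by
    rw [Matrix.det_mul, det_Em]
  rw [h1, Em_mul c A v hb si ti hti, det_CmD]
lemma denom_ne {μ n : ℕ} (c : Fin n → Fin μ) (i : Fin n) :
    algebraMap (Lau μ) (FractionRing (Lau μ)) (TU c i : Lau μ)
      - algebraMap (Lau μ) (FractionRing (Lau μ)) (((TU c i)⁻¹ : (Lau μ)ˣ) : Lau μ) ≠ 0 := by
  set φ := algebraMap (Lau μ) (FractionRing (Lau μ))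
  intro h
  have hu : (TU c i : Lau μ) * (((TU c i)⁻¹ : (Lau μ)ˣ) : Lau μ) = 1 := by
    rw [← Units.val_mul, mul_inv_cancel, Units.val_one]
  have h2 : φ (((TU c i : Lau μ)) ^ 2 - 1) = 0 := by
    have : ((TU c i : Lau μ)) ^ 2 - 1
        = (TU c i : Lau μ) * ((TU c i : Lau μ) - (((TU c i)⁻¹ : (Lau μ)ˣ) : Lau μ)) := by
      rw [mul_sub, hu]; ring
    rw [this, map_mul, map_sub, h, mul_zero]
  have h3 : ((TU c i : Lau μ)) ^ 2 - 1 = 0 :=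
    (map_eq_zero_iff φ (IsFractionRing.injective (Lau μ) (FractionRing (Lau μ)))).1 h2
  exact TU_sq_ne_one c i (by linear_combination h3)

lemma sq_sub_one_ne {μ n : ℕ} (c : Fin n → Fin μ) (i : Fin n) :
    (algebraMap (Lau μ) (FractionRing (Lau μ)) (TU c i : Lau μ)) ^ 2 - 1 ≠ 0 := by
  set φ := algebraMap (Lau μ) (FractionRing (Lau μ))
  intro h
  have h2 : φ (((TU c i : Lau μ)) ^ 2 - 1) = 0 := by
    rw [map_sub, map_pow, map_one, h]
  have h3 : ((TU c i : Lau μ)) ^ 2 - 1 = 0 :=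
    (map_eq_zero_iff φ (IsFractionRing.injective (Lau μ) (FractionRing (Lau μ)))).1 h2
  exact TU_sq_ne_one c i (by linear_combination h3)

lemma phi_unit_ne {μ : ℕ} (u : (Lau μ)ˣ) :
    algebraMap (Lau μ) (FractionRing (Lau μ)) (u : Lau μ) ≠ 0 :=
  ((algebraMap (Lau μ) (FractionRing (Lau μ))).isUnit_map u.isUnit).ne_zero

set_option maxHeartbeats 1600000 in
/-- the verification of Jiang's axiom (R3) for the invariant `f`, in
matrix form. With `t = t_{c_n}`, `s = t_{j₀}`, `c⁺ = (c_1,…,c_n,j₀)`,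
`M = [[A,0],[v,1]]` and `G''` the identity except for the last `2×2` diagonal
block `[[1, 1 − s⁻¹],[0, s⁻¹ t⁻¹]]`, if `(A,v)` satisfies the boundary relation for
`c` then for every `m ∈ Λ_μ`:
`F(c⁺, s·t·m, M·G'') = (t − t⁻¹) · F(c, m, A)` in `Q` (here `n = l + 2 ≥ 2`). -/
theorem stmt8 {μ l : ℕ} (c : Fin (l+2) → Fin μ) (j₀ : Fin μ)
    (A : Matrix (Fin (l+1)) (Fin (l+1)) (Lau μ)) (v : Fin (l+1) → Lau μ)
    (hb : BoundaryRel c A v) (m : Lau μ) :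
    Fdef (Fin.snoc c j₀)
        ((tU j₀ : Lau μ) * (tU (c (Fin.last (l+1))) : Lau μ) * m)
        (aug A v *
          last2Block l 1 (1 - (((tU j₀)⁻¹ : (Lau μ)ˣ) : Lau μ)) 0
            ((((tU j₀)⁻¹ : (Lau μ)ˣ) : Lau μ) *
              (((tU (c (Fin.last (l+1))))⁻¹ : (Lau μ)ˣ) : Lau μ)))
      = (algebraMap (Lau μ) (FractionRing (Lau μ)) (tU (c (Fin.last (l+1))) : Lau μ)
          - algebraMap (Lau μ) (FractionRing (Lau μ))
              (((tU (c (Fin.last (l+1))))⁻¹ : (Lau μ)ˣ) : Lau μ)) *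
          Fdef c m A := by
  classical
  set φ := algebraMap (Lau μ) (FractionRing (Lau μ)) with hφ
  set t0 : (Lau μ)ˣ := tU (c (Fin.last (l+1))) with ht0
  set s0 : (Lau μ)ˣ := tU j₀ with hs0
  set T0 : (Lau μ)ˣ := TU c (Fin.last (l+1)) with hT0
  -- the unit `T` of the extended coloring is `T0 * s0`
  have hU : TU (Fin.snoc c j₀) (Fin.last (l+2)) = T0 * s0 := by
    rw [TU_last_eq]
    simp only [Fin.snoc_castSucc, Fin.snoc_last]
    congr 1
    rw [hT0, TU, Iic_last_eq_univ]
  -- `T_{n-1} = T0 * t0⁻¹`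
  have hunit : TU c ((Fin.last l).castSucc) * t0 = T0 := by
    rw [hT0, TU_last_eq c, TU_castSucc', Iic_last_eq_univ, ht0]
  have hti : (TU c ((Fin.last l).castSucc) : Lau μ)
      = (T0 : Lau μ) * ((t0⁻¹ : (Lau μ)ˣ) : Lau μ) := by
    rw [← Units.val_mul]
    congr 1
    rw [← hunit, mul_inv_cancel_right]
  -- key determinant identity
  have hkey := key_det c A v hb ((s0⁻¹ : (Lau μ)ˣ) : Lau μ) ((t0⁻¹ : (Lau μ)ˣ) : Lau μ) hti
  -- apply g
  have hkey2 := congrArg (gmap μ) hkey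
  rw [map_mul, map_mul, map_mul, map_sub, map_sub, map_sub, map_one, gmap_TU, ht0, hs0,
    gmap_tU_inv, gmap_tU_inv, ← ht0, ← hs0] at hkey2
  -- push to the fraction field
  have hkQ := congrArg φ hkey2
  rw [map_mul, map_mul, map_mul, map_sub, map_sub, map_sub, map_one, map_pow, map_pow,
    map_pow] at hkQ
  -- unfold Fdef and rewrite the extended torsion unit
  simp only [Fdef, hU, mul_inv_rev, Units.val_mul, map_mul]
  set X := φ (T0 : Lau μ) with hX
  set Xi := φ ((T0⁻¹ : (Lau μ)ˣ) : Lau μ) with hXi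
  set Y := φ (t0 : Lau μ) with hY
  set Yi := φ ((t0⁻¹ : (Lau μ)ˣ) : Lau μ) with hYi
  set S := φ (s0 : Lau μ) with hS
  set Si := φ ((s0⁻¹ : (Lau μ)ˣ) : Lau μ) with hSi
  set dB := φ (gmap μ (aug A v * last2Block l 1
      (1 - ((s0⁻¹ : (Lau μ)ˣ) : Lau μ)) 0
      (((s0⁻¹ : (Lau μ)ˣ) : Lau μ) * ((t0⁻¹ : (Lau μ)ˣ) : Lau μ)) - 1).det) with hdB
  set dA := φ (gmap μ (A - 1).det) with hdA
  have hx : X * Xi = 1 := by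
    rw [hX, hXi, ← map_mul, ← Units.val_mul, mul_inv_cancel, Units.val_one, map_one]
  have hy : Y * Yi = 1 := by
    rw [hY, hYi, ← map_mul, ← Units.val_mul, mul_inv_cancel, Units.val_one, map_one]
  have hs : S * Si = 1 := by
    rw [hS, hSi, ← map_mul, ← Units.val_mul, mul_inv_cancel, Units.val_one, map_one]
  have hXne : X ≠ 0 := phi_unit_ne T0
  have hYne : Y ≠ 0 := phi_unit_ne t0
  have hSne : S ≠ 0 := phi_unit_ne s0
  have hD2 : X - Xi ≠ 0 := denom_ne c (Fin.last (l+1))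
  have hD1 : X * S - Si * Xi ≠ 0 := by
    have h := denom_ne (Fin.snoc c j₀) (Fin.last (l+2))
    rw [hU, mul_inv_rev, Units.val_mul, Units.val_mul, map_mul, map_mul] at h
    exact h
  have hX21 : X ^ 2 - 1 ≠ 0 := sq_sub_one_ne c (Fin.last (l+1))
  have hexp : l + 2 + 2 = (l + 1 + 2) + 1 := by omega
  rw [hexp, pow_succ, ← mul_div_assoc, div_eq_div_iff hD1 hD2]
  apply mul_right_cancel₀ hXne
  set E := ((-1 : FractionRing (Lau μ)) ^ (l + 1 + 2)) with hE
  set Mq := (algebraMap (Lau μ) (FractionRing (Lau μ))) m with hMq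
  linear_combination (-(E * S * Y * Mq)) * hkQ
    + (E * S * Y * Mq * dB + E * Mq * dA * (Y - Yi) * Si) * hx
    + (-(E * Mq * dA * (X ^ 2 - Si ^ 2) * S * Yi)) * hy
    + (-(E * Mq * dA * (Y - Yi) * Si)) * hs
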